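/- Let k be a field, A a commutative k-algebra, M an A-module, V a k-vector space of finite dimension r with basis ξ_1,…,ξ_r, and φ : M → V* ⊗_k A an A-linear map; for ξ ∈ V and m ∈ M write ⟨ξ, φ(m)⟩ ∈ A for the evaluation. Let 0 ≤ κ ≤ r and suppose Fit_{κ−1}(coker φ) = 0. Set m := r − κ. Then for any elements ω_1,…,ω_m, ω ∈ M and any η ∈ V, letting a := det(⟨ξ_μ, φ(ω_ν)⟩)_{1≤μ,ν≤m} and, for 1 ≤ ν ≤ m, letting E_ν(η) be the determinant of the matrix (⟨ξ_μ, φ(ω_{ν'})⟩)_{μ,ν'} with its ν-th row replaced by (⟨η, φ(ω_1)⟩,…,⟨η, φ(ω_m)⟩), the identity ⟨η, φ(ω)⟩ · a = Σ_{ν=1}^{m} ⟨ξ_ν, φ(ω)⟩ · E_ν(η) holds in A. -/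

import Mathlib

/-!
Statement 12: a determinantal identity.  `V* ⊗ₖ A` is represented by
`V →ₗ[k] A`, and `⟨ξ, φ(m)⟩ = φ m ξ`.  The hypothesis `Fit_{κ-1}(coker φ) = 0`
says that the ideal generated by the `(r-κ+1) × (r-κ+1)` minors of the
presentation matrix of `coker φ` (whose columns are the vectors
`(⟨ξ_i, φ(ω)⟩)_i` for `ω ∈ M`) is zero.
-/


private lemma statement12_aux {A : Type*} [CommRing A] (m : ℕ)
    (aM : Matrix (Fin m) (Fin m) A) (u v : Fin m → A) (c : A)
    (h : (Matrix.of (Fin.cons (Fin.cons c v)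
        (fun μ => Fin.cons (u μ) (aM μ)) : Fin (m+1) → Fin (m+1) → A)).det = 0) :
    c * aM.det = ∑ ν, u ν * (aM.updateRow ν v).det := by
  cases m with
  | zero =>
      have hc : c = 0 := by
        simpa [Matrix.det_fin_one] using h
      simp [Matrix.det_fin_zero, hc]
  | succ n =>
      set D : Matrix (Fin (n+1+1)) (Fin (n+1+1)) A :=
        Matrix.of (Fin.cons (Fin.cons c v) (fun μ => Fin.cons (u μ) (aM μ))) with hDdef
      rw [Matrix.det_succ_column_zero, Fin.sum_univ_succ] at h
      have h1 : D.submatrix (Fin.succAbove 0) Fin.succ = aM := by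
        ext μ ν
        simp [hDdef, Fin.succAbove_zero]
      have hsq : ∀ p : ℕ, ((-1 : A) ^ p) * ((-1 : A) ^ p) = 1 := by
        intro p; rw [← mul_pow]; norm_num
      have h2 : ∀ μ : Fin (n+1),
          (D.submatrix μ.succ.succAbove Fin.succ).det
            = (-1 : A) ^ (μ : ℕ) * (aM.updateRow μ v).det := by
        intro μ
        have hidx : ∀ ρ : Fin (n+1),
            μ.succ.succAbove (μ.cycleRange ρ) = if ρ = μ then 0 else ρ.succ := by
          intro ρ
          rcases lt_trichotomy ρ μ with hlt | heq | hgt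
          · rw [if_neg hlt.ne, Fin.cycleRange_of_lt hlt]
            have hv : ((ρ + 1 : Fin (n+1)) : ℕ) = (ρ : ℕ) + 1 :=
              Fin.val_add_one_of_lt (lt_of_lt_of_le hlt (Fin.le_last μ))
            have hcond : (ρ + 1 : Fin (n+1)).castSucc < μ.succ := by
              rw [Fin.lt_def]
              simp only [Fin.coe_castSucc, Fin.val_succ, hv]
              exact Nat.succ_lt_succ hlt
            rw [Fin.succAbove_of_castSucc_lt _ _ hcond]
            ext
            simp [hv]
          · subst heq
            rw [if_pos rfl, Fin.cycleRange_self]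
            rw [Fin.succAbove_of_castSucc_lt _ _ (by simp [Fin.succ_pos])]
            simp
          · rw [if_neg hgt.ne', Fin.cycleRange_of_gt hgt]
            rw [Fin.succAbove_of_le_castSucc _ _ (by
              rw [Fin.le_def]
              simp only [Fin.coe_castSucc, Fin.val_succ]
              exact hgt)]
        have hmat : aM.updateRow μ v
            = (D.submatrix μ.succ.succAbove Fin.succ).submatrix (μ.cycleRange) id := by
          ext ρ ν
          by_cases hρ : ρ = μ
          · subst hρ
            simp [Matrix.updateRow_self, hidx, hDdef]
          · simp [Matrix.updateRow_ne hρ, hidx, hρ, hDdef]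
        have h3 : (aM.updateRow μ v).det
            = (-1 : A) ^ (μ : ℕ) * (D.submatrix μ.succ.succAbove Fin.succ).det := by
          rw [hmat, Matrix.det_permute, Fin.sign_cycleRange]
          norm_num
        rw [h3, ← mul_assoc, hsq, one_mul]
      simp only [h1, h2] at h
      simp only [h1, h2, Fin.val_zero, pow_zero, one_mul, Fin.val_succ,
        Matrix.of_apply, Fin.cons_zero, Fin.cons_succ, hDdef] at h
      have h4 : ∀ μ : Fin (n+1),
          (-1 : A) ^ ((μ : ℕ) + 1) * u μ * ((-1 : A) ^ (μ : ℕ) * (aM.updateRow μ v).det)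
            = -(u μ * (aM.updateRow μ v).det) := by
        intro μ
        have hμ := hsq (μ : ℕ)
        rw [pow_succ]
        linear_combination (-(u μ * (aM.updateRow μ v).det)) * hμ
      rw [Finset.sum_congr rfl (fun μ _ => h4 μ)] at h
      rw [Finset.sum_neg_distrib] at h
      linear_combination h

theorem statement12 {k A M V : Type*}
    [Field k] [CommRing A] [Algebra k A]
    [AddCommGroup M] [Module A M]
    [AddCommGroup V] [Module k V]
    (r κ : ℕ) (hκ : κ ≤ r) (b : Module.Basis (Fin r) k V)
    (φ : M →ₗ[A] (V →ₗ[k] A))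
    (hFit : Ideal.span {d : A |
        ∃ (ω : Fin (r - κ + 1) → M) (s : Fin (r - κ + 1) → Fin r),
          d = Matrix.det (Matrix.of fun i j => φ (ω j) (b (s i)))} = ⊥)
    (ω : Fin (r - κ) → M) (ω₀ : M) (η : V) :
    φ ω₀ η *
        Matrix.det (Matrix.of fun μ ν => φ (ω ν) (b (Fin.castLE (Nat.sub_le r κ) μ))) =
      ∑ ν : Fin (r - κ),
        φ ω₀ (b (Fin.castLE (Nat.sub_le r κ) ν)) *
          Matrix.det
            ((Matrix.of fun μ ν' => φ (ω ν') (b (Fin.castLE (Nat.sub_le r κ) μ))).updateRow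
              ν (fun ν' => φ (ω ν') η)) := by

  classical
  rw [Ideal.span_eq_bot] at hFit
  set cL : Fin (r - κ) → Fin r := Fin.castLE (Nat.sub_le r κ) with hcL
  set aM : Matrix (Fin (r - κ)) (Fin (r - κ)) A :=
    Matrix.of fun μ ν => φ (ω ν) (b (cL μ)) with haM
  -- key identity on basis vectors
  have key : ∀ i : Fin r,
      φ ω₀ (b i) * aM.det
        = ∑ ν, φ ω₀ (b (cL ν)) * (aM.updateRow ν fun ν' => φ (ω ν') (b i)).det := by
    intro i
    apply statement12_aux
    have hEq : (Matrix.of (Fin.cons (Fin.cons (φ ω₀ (b i)) (fun ν' => φ (ω ν') (b i)))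
          (fun μ => Fin.cons (φ ω₀ (b (cL μ))) (aM μ)) : Fin (r - κ + 1) → Fin (r - κ + 1) → A))
        = Matrix.of fun t j => φ ((Fin.cons ω₀ ω : Fin (r - κ + 1) → M) j) (b ((Fin.cons i cL : Fin (r - κ + 1) → Fin r) t)) := by
      ext t j
      induction t using Fin.cases with
      | zero =>
          induction j using Fin.cases with
          | zero => simp
          | succ ν => simp
      | succ μ =>
          induction j using Fin.cases with
          | zero => simp
          | succ ν => simp [haM]
    rw [hEq]
    exact hFit _ ⟨Fin.cons ω₀ ω, Fin.cons i cL, rfl⟩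
  -- linearity in η
  have hadd : ∀ (x y : V) (ν : Fin (r - κ)),
      (aM.updateRow ν fun ν' => φ (ω ν') (x + y)).det
        = (aM.updateRow ν fun ν' => φ (ω ν') x).det
          + (aM.updateRow ν fun ν' => φ (ω ν') y).det := by
    intro x y ν
    rw [show (fun ν' => φ (ω ν') (x + y))
        = (fun ν' => φ (ω ν') x) + (fun ν' => φ (ω ν') y) from
      funext fun ν' => map_add _ _ _]
    exact Matrix.det_updateRow_add _ _ _ _
  have hsmul : ∀ (t : k) (x : V) (ν : Fin (r - κ)),
      (aM.updateRow ν fun ν' => φ (ω ν') (t • x)).det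
        = algebraMap k A t * (aM.updateRow ν fun ν' => φ (ω ν') x).det := by
    intro t x ν
    rw [show (fun ν' => φ (ω ν') (t • x))
        = algebraMap k A t • fun ν' => φ (ω ν') x from
      funext fun ν' => by
        rw [map_smul]
        simp [Algebra.smul_def]]
    exact Matrix.det_updateRow_smul _ _ _ _
  let L : V →ₗ[k] A :=
    { toFun := fun x => φ ω₀ x * aM.det
        - ∑ ν, φ ω₀ (b (cL ν)) * (aM.updateRow ν fun ν' => φ (ω ν') x).det
      map_add' := by
        intro x y
        simp only [hadd]
        simp only [map_add, mul_add, Finset.sum_add_distrib]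
        ring
      map_smul' := by
        intro t x
        simp only [hsmul]
        simp only [map_smul, RingHom.id_apply, smul_sub, Finset.smul_sum,
          Algebra.smul_def, smul_eq_mul]
        ring_nf
        rw [Finset.mul_sum]
        congr 1
        refine Finset.sum_congr rfl fun ν _ => ?_
        ring }
  have hL : L = 0 := by
    apply b.ext
    intro i
    simp only [L, LinearMap.coe_mk, AddHom.coe_mk, LinearMap.zero_apply]
    rw [sub_eq_zero]
    exact key i
  have := LinearMap.congr_fun hL η
  simp only [L, LinearMap.coe_mk, AddHom.coe_mk, LinearMap.zero_apply] at this
  exact sub_eq_zero.mp this
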